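/- arXiv:1712.07783 — 3 statements merged into one kernel-verified Lean document; each statement's English description precedes it below -/
import Mathlib

section
/- Let p be an odd prime, R = F_p[u]/(u^2), θ an automorphism of R, and C a nonzero skew cyclic code of length n over R (a left R[x;θ]-submodule of R[x;θ]/⟨x^n − 1⟩) containing no monic polynomials. Then every polynomial of minimal degree in C has all coefficients in uF_p; that is, a polynomial a(x) of minimal degree in C satisfies a(x) = u·ā(x) for some ā(x) ∈ F_p[x]. -/
open TrivSqZeroExt

theorem RingAut.one_apply' {R : Type*} [Ring R] (b : R) : (1 : RingAut R) b = b := rfl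

/-- The skew polynomial ring `R[x;θ]`, as finitely supported coefficient
sequences with multiplication twisted by the ring automorphism `θ`:
`(a x^i) * (b x^j) = a θ^i(b) x^{i+j}`. -/
def SkewPoly (R : Type*) [Ring R] (θ : RingAut R) : Type _ := ℕ →₀ R

namespace SkewPoly

variable {R : Type*} [Ring R] (θ : RingAut R)

/-- The skew-twisted convolution product. -/
noncomputable def mulAux (f g : ℕ →₀ R) : ℕ →₀ R :=
  f.sum fun i a => g.sum fun j b => Finsupp.single (i + j) (a * (θ ^ i) b)

theorem mulAux_zero_left (g : ℕ →₀ R) : mulAux θ 0 g = 0 := Finsupp.sum_zero_index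

theorem mulAux_zero_right (f : ℕ →₀ R) : mulAux θ f 0 = 0 := by
  simp [mulAux, Finsupp.sum_zero_index]

theorem mulAux_add_left (f f' g : ℕ →₀ R) :
    mulAux θ (f + f') g = mulAux θ f g + mulAux θ f' g := by
  unfold mulAux
  apply Finsupp.sum_add_index' <;> intros <;> simp [add_mul, Finsupp.single_add, Finsupp.sum_add]

theorem mulAux_add_right (f g g' : ℕ →₀ R) :
    mulAux θ f (g + g') = mulAux θ f g + mulAux θ f g' := by
  unfold mulAux
  rw [← Finsupp.sum_add]
  apply Finsupp.sum_congr
  intro i _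
  apply Finsupp.sum_add_index' <;> intros <;> simp [mul_add, Finsupp.single_add]

theorem one_mulAux (g : ℕ →₀ R) : mulAux θ (Finsupp.single 0 1) g = g := by
  unfold mulAux
  rw [Finsupp.sum_single_index]
  · simp [RingAut.one_apply', Finsupp.sum_single]
  · simp

theorem mulAux_one (f : ℕ →₀ R) : mulAux θ f (Finsupp.single 0 1) = f := by
  unfold mulAux
  have : ∀ i ∈ f.support, ((Finsupp.single 0 1 : ℕ →₀ R).sum fun j b =>
      Finsupp.single (i + j) (f i * (θ ^ i) b)) = Finsupp.single i (f i) := by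
    intro i _
    rw [Finsupp.sum_single_index] <;> simp
  rw [Finsupp.sum_congr this, Finsupp.sum_single f]

theorem mulAux_single_single (i j : ℕ) (a b : R) :
    mulAux θ (Finsupp.single i a) (Finsupp.single j b) =
      Finsupp.single (i + j) (a * (θ ^ i) b) := by
  unfold mulAux
  rw [Finsupp.sum_single_index, Finsupp.sum_single_index]
  · simp
  · rw [Finsupp.sum_single_index] <;> simp

theorem mulAux_assoc (f g h : ℕ →₀ R) :
    mulAux θ (mulAux θ f g) h = mulAux θ f (mulAux θ g h) := by
  induction f using Finsupp.induction_linear with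
  | zero => simp [mulAux_zero_left]
  | add f f' hf hf' => simp [mulAux_add_left, hf, hf']
  | single i a =>
    induction g using Finsupp.induction_linear with
    | zero => simp [mulAux_zero_left, mulAux_zero_right]
    | add g g' hg hg' => simp [mulAux_add_left, mulAux_add_right, hg, hg']
    | single j b =>
      induction h using Finsupp.induction_linear with
      | zero => simp [mulAux_zero_right]
      | add h h' hh hh' => simp [mulAux_add_right, hh, hh']
      | single k c =>
        rw [mulAux_single_single, mulAux_single_single, mulAux_single_single,
          mulAux_single_single]
        rw [add_assoc, mul_assoc, map_mul, pow_add]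
        rfl

variable {θ}

noncomputable instance : AddCommGroup (SkewPoly R θ) := inferInstanceAs (AddCommGroup (ℕ →₀ R))

/-- Reinterpret a skew polynomial as a finitely supported function. -/
def toFinsupp (f : SkewPoly R θ) : ℕ →₀ R := f

/-- Build a skew polynomial out of a finitely supported function. -/
def ofFinsupp (f : ℕ →₀ R) : SkewPoly R θ := f

noncomputable instance : Ring (SkewPoly R θ) where
  __ := (inferInstance : AddCommGroup (SkewPoly R θ))
  mul f g := mulAux θ (toFinsupp f) (toFinsupp g)
  one := Finsupp.single 0 1
  left_distrib f g h := mulAux_add_right θ (toFinsupp f) (toFinsupp g) (toFinsupp h)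
  right_distrib f g h := mulAux_add_left θ (toFinsupp f) (toFinsupp g) (toFinsupp h)
  zero_mul := mulAux_zero_left θ
  mul_zero := mulAux_zero_right θ
  mul_assoc := mulAux_assoc θ
  one_mul := one_mulAux θ
  mul_one := mulAux_one θ

variable (θ) in
/-- The constant skew polynomial `a`. -/
noncomputable def C (a : R) : SkewPoly R θ := ofFinsupp (Finsupp.single 0 a)

variable (θ) in
/-- The variable `x` of the skew polynomial ring. -/
noncomputable def X : SkewPoly R θ := ofFinsupp (Finsupp.single 1 1)

/-- The `n`-th coefficient of a skew polynomial. -/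
def coeff (f : SkewPoly R θ) (n : ℕ) : R := toFinsupp f n

/-- The degree of a skew polynomial (`⊥` for the zero polynomial). -/
def degree (f : SkewPoly R θ) : WithBot ℕ := (toFinsupp f).support.max

/-- The degree of a skew polynomial as a natural number. -/
def natDegree (f : SkewPoly R θ) : ℕ := WithBot.unbotD 0 (degree f)

/-- The leading coefficient of a skew polynomial. -/
def leadingCoeff (f : SkewPoly R θ) : R := coeff f (natDegree f)

/-- A skew polynomial is monic if its leading coefficient is `1`. -/
def Monic (f : SkewPoly R θ) : Prop := leadingCoeff f = 1

end SkewPoly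

/-- The inclusion of `F_p[x]` into the skew polynomial ring
`(F_p + u F_p)[x;θ]` (coefficientwise `a ↦ a + u·0`); this is the natural
embedding of `F_p[x]` as a subring of `R[x;θ]` since `θ` fixes `F_p`. -/
noncomputable def SkewPoly.ofPoly {p : ℕ}
    (θ : RingAut (DualNumber (ZMod p))) (f : Polynomial (ZMod p)) :
    SkewPoly (DualNumber (ZMod p)) θ :=
  SkewPoly.ofFinsupp
    (Finsupp.mapRange (inl : ZMod p → DualNumber (ZMod p)) (inl_zero (ZMod p)) f.toFinsupp.coeff)

/-- Reduction of a skew polynomial over `F_p + u F_p` modulo `u`, i.e. the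
polynomial in `F_p[x]` whose coefficients are the first components of the
coefficients. -/
noncomputable def SkewPoly.fstPoly {p : ℕ}
    {θ : RingAut (DualNumber (ZMod p))} (f : SkewPoly (DualNumber (ZMod p)) θ) :
    Polynomial (ZMod p) :=
  Polynomial.ofFinsupp (AddMonoidAlgebra.ofCoeff
    (Finsupp.mapRange TrivSqZeroExt.fst fst_zero (SkewPoly.toFinsupp f)))

namespace SkewPoly

variable {R : Type*} [Ring R] {θ : RingAut R}

theorem toFinsupp_C_mul' (c : R) (f : SkewPoly R θ) :
    toFinsupp (C θ c * f) =
      Finsupp.mapRange (fun b => c * b) (mul_zero c) (toFinsupp f) := by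
  show mulAux θ (Finsupp.single 0 c) (toFinsupp f) = _
  induction toFinsupp f using Finsupp.induction_linear with
  | zero => simp [mulAux_zero_right]
  | add g g' hg hg' =>
      rw [mulAux_add_right, hg, hg', ← Finsupp.mapRange_add (mul_add c)]
  | single j b =>
      rw [mulAux_single_single, Finsupp.mapRange_single, zero_add, pow_zero,
        RingAut.one_apply']

theorem coeff_C_mul' (c : R) (f : SkewPoly R θ) (i : ℕ) :
    coeff (C θ c * f) i = c * coeff f i := by
  rw [coeff, toFinsupp_C_mul', Finsupp.mapRange_apply]; rfl

theorem degree_C_mul_le' (c : R) (f : SkewPoly R θ) :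
    degree (C θ c * f) ≤ degree f := by
  apply Finset.max_mono
  rw [toFinsupp_C_mul']
  exact Finsupp.support_mapRange

theorem support_nonempty' {f : SkewPoly R θ} (hf : f ≠ 0) :
    (toFinsupp f).support.Nonempty :=
  Finsupp.support_nonempty_iff.2 hf

theorem natDegree_eq_max' {f : SkewPoly R θ} (hf : f ≠ 0) :
    natDegree f = (toFinsupp f).support.max' (support_nonempty' hf) := by
  show WithBot.unbotD 0 (toFinsupp f).support.max
      = (toFinsupp f).support.max' (support_nonempty' hf)
  rw [← Finset.coe_max' (support_nonempty' hf), WithBot.unbotD_coe]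

theorem degree_eq_natDegree' {f : SkewPoly R θ} (hf : f ≠ 0) :
    degree f = (natDegree f : WithBot ℕ) := by
  rw [natDegree_eq_max' hf]
  show (toFinsupp f).support.max = _
  rw [← Finset.coe_max' (support_nonempty' hf)]
  rfl

theorem coeff_natDegree_ne_zero' {f : SkewPoly R θ} (hf : f ≠ 0) :
    coeff f (natDegree f) ≠ 0 := by
  rw [natDegree_eq_max' hf]
  exact Finsupp.mem_support_iff.1 (Finset.max'_mem _ (support_nonempty' hf))

theorem le_natDegree_of_ne_zero' {f : SkewPoly R θ} (hf : f ≠ 0) {i : ℕ}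
    (hi : coeff f i ≠ 0) : i ≤ natDegree f := by
  rw [natDegree_eq_max' hf]
  exact Finset.le_max' _ i (Finsupp.mem_support_iff.2 hi)

end SkewPoly

open SkewPoly DualNumber in
/-- If a nonzero skew cyclic code `C ⊆ R[x;θ]/⟨xⁿ-1⟩` contains no monic
polynomial, then any polynomial of minimal degree in `C` has the form
`u·ā(x)` with `ā(x) ∈ F_p[x]`. -/
theorem skew_code_no_monic_min_degree (p : ℕ) (hp : p.Prime) (hodd : p ≠ 2)
    (θ : RingAut (DualNumber (ZMod p))) (n : ℕ) (hn : 0 < n)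
    (Code : Submodule (SkewPoly (DualNumber (ZMod p)) θ)
      (SkewPoly (DualNumber (ZMod p)) θ ⧸ Ideal.span {SkewPoly.X θ ^ n - 1}))
    (hC : Code ≠ ⊥)
    (hnomonic : ∀ f : SkewPoly (DualNumber (ZMod p)) θ,
      (Ideal.span {SkewPoly.X θ ^ n - 1}).mkQ f ∈ Code →
        SkewPoly.degree f < (n : WithBot ℕ) → ¬ SkewPoly.Monic f)
    (a : SkewPoly (DualNumber (ZMod p)) θ) (ha0 : a ≠ 0)
    (haC : (Ideal.span {SkewPoly.X θ ^ n - 1}).mkQ a ∈ Code)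
    (hadeg : SkewPoly.degree a < (n : WithBot ℕ))
    (hmin : ∀ b : SkewPoly (DualNumber (ZMod p)) θ,
      (Ideal.span {SkewPoly.X θ ^ n - 1}).mkQ b ∈ Code → b ≠ 0 →
        SkewPoly.degree b < (n : WithBot ℕ) → SkewPoly.degree a ≤ SkewPoly.degree b) :
    ∃ abar : Polynomial (ZMod p), a = SkewPoly.C θ ε * SkewPoly.ofPoly θ abar := by
  classical
  haveI : Fact p.Prime := ⟨hp⟩
  have hmulmem : ∀ c : DualNumber (ZMod p),
      (Ideal.span {SkewPoly.X θ ^ n - 1}).mkQ (SkewPoly.C θ c * a) ∈ Code := by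
    intro c
    rw [← smul_eq_mul, map_smul]
    exact Code.smul_mem _ haC
  set d := SkewPoly.natDegree a with hd
  have hdeg : SkewPoly.degree a = (d : WithBot ℕ) := degree_eq_natDegree' ha0
  have hlc : SkewPoly.coeff a d ≠ 0 := coeff_natDegree_ne_zero' ha0
  -- Step 1: the leading coefficient lies in uF_p
  have hfst : fst (SkewPoly.coeff a d) = 0 := by
    by_contra hf
    set α := SkewPoly.coeff a d with hα
    set β : DualNumber (ZMod p) :=
      ⟨(fst α)⁻¹, -((fst α)⁻¹ * snd α * (fst α)⁻¹)⟩ with hβ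
    have hβα : β * α = 1 := by
      apply TrivSqZeroExt.ext
      · show (fst α)⁻¹ * fst α = 1
        exact inv_mul_cancel₀ hf
      · show (fst α)⁻¹ • snd α +
          MulOpposite.op (fst α) • (-((fst α)⁻¹ * snd α * (fst α)⁻¹)) = 0
        rw [smul_eq_mul, op_smul_eq_mul]
        field_simp
        ring
    have hco : ∀ i, SkewPoly.coeff (SkewPoly.C θ β * a) i = β * SkewPoly.coeff a i :=
      coeff_C_mul' β a
    have hcd : SkewPoly.coeff (SkewPoly.C θ β * a) d = 1 := by rw [hco, ← hα, hβα]
    have hfne : SkewPoly.C θ β * a ≠ 0 := by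
      intro h
      exact one_ne_zero (α := DualNumber (ZMod p)) (by rw [← hcd, h]; rfl)
    have hdle : SkewPoly.degree (SkewPoly.C θ β * a) ≤ SkewPoly.degree a :=
      degree_C_mul_le' β a
    have hdge : (d : WithBot ℕ) ≤ SkewPoly.degree (SkewPoly.C θ β * a) := by
      apply Finset.le_max
      rw [Finsupp.mem_support_iff]
      show SkewPoly.coeff (SkewPoly.C θ β * a) d ≠ 0
      rw [hcd]; exact one_ne_zero
    have hdeq : SkewPoly.degree (SkewPoly.C θ β * a) = (d : WithBot ℕ) :=
      le_antisymm (hdeg ▸ hdle) hdge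
    have hnd : SkewPoly.natDegree (SkewPoly.C θ β * a) = d := by
      have : SkewPoly.natDegree (SkewPoly.C θ β * a)
          = WithBot.unbotD 0 (SkewPoly.degree (SkewPoly.C θ β * a)) := rfl
      rw [this, hdeq]
      rfl
    refine hnomonic _ (hmulmem β) ?_ ?_
    · rw [hdeq, ← hdeg]; exact hadeg
    · rw [SkewPoly.Monic, SkewPoly.leadingCoeff, hnd, hcd]
  -- Step 2: `ε • a = 0`, i.e. all coefficients lie in uF_p
  have hb0 : SkewPoly.C θ ε * a = 0 := by
    by_contra hbne
    have hdle : SkewPoly.degree (SkewPoly.C θ ε * a) ≤ SkewPoly.degree a :=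
      degree_C_mul_le' ε a
    have hge := hmin _ (hmulmem ε) hbne (lt_of_le_of_lt hdle hadeg)
    set e := SkewPoly.natDegree (SkewPoly.C θ ε * a) with he
    have hdegb : SkewPoly.degree (SkewPoly.C θ ε * a) = (e : WithBot ℕ) :=
      degree_eq_natDegree' hbne
    have hce : SkewPoly.coeff (SkewPoly.C θ ε * a) e ≠ 0 :=
      coeff_natDegree_ne_zero' hbne
    rw [coeff_C_mul'] at hce
    have hae : SkewPoly.coeff a e ≠ 0 := fun h => hce (by rw [h, mul_zero])
    have hed : e ≤ d := le_natDegree_of_ne_zero' ha0 hae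
    have hde : d ≤ e := by
      have := hge
      rw [hdeg, hdegb, Nat.cast_le] at this
      exact this
    have heq : e = d := le_antisymm hed hde
    apply hce
    rw [heq]
    apply TrivSqZeroExt.ext
    · simp
    · simp [hfst]
  have hball : ∀ i, fst (SkewPoly.coeff a i) = 0 := by
    intro i
    have h1 : SkewPoly.coeff (SkewPoly.C θ ε * a) i = 0 := by rw [hb0]; rfl
    rw [coeff_C_mul'] at h1
    have := congrArg snd h1
    simpa using this
  refine ⟨Polynomial.ofFinsupp (AddMonoidAlgebra.ofCoeff
    (Finsupp.mapRange snd snd_zero (SkewPoly.toFinsupp a))), ?_⟩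
  have key : SkewPoly.toFinsupp a =
      SkewPoly.toFinsupp (SkewPoly.C θ ε * SkewPoly.ofPoly θ
        (Polynomial.ofFinsupp (AddMonoidAlgebra.ofCoeff
            (Finsupp.mapRange snd snd_zero (SkewPoly.toFinsupp a))))) := by
    rw [toFinsupp_C_mul']
    ext i
    · simp only [SkewPoly.ofPoly, SkewPoly.ofFinsupp, SkewPoly.toFinsupp,
        AddMonoidAlgebra.coeff_ofCoeff, Finsupp.mapRange_apply]
      have hbi := hball i
      simp only [SkewPoly.coeff, SkewPoly.toFinsupp] at hbi
      simpa using hbi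
    · simp only [SkewPoly.ofPoly, SkewPoly.ofFinsupp, SkewPoly.toFinsupp,
        AddMonoidAlgebra.coeff_ofCoeff, Finsupp.mapRange_apply]
      simp [op_smul_eq_mul]
      exact (Finsupp.mapRange_apply (hf := snd_zero)).symm
  exact key
end

section
/- Let p be an odd prime and C = ⟨u ā(x)⟩ a skew cyclic code of length n over R = F_p[u]/(u^2), where ā(x) ∈ F_p[x] is monic of degree r and ā(x) divides x^n − 1 in F_p[x]. Then the set β = { u ā(x), x·u ā(x), ..., x^{n−r−1}·u ā(x) } is a minimal generating set for C over F_p, and |C| = p^{n−r}. -/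
open TrivSqZeroExt

namespace SkewHelper

open TrivSqZeroExt Polynomial

section Generic

variable {R : Type*} [Ring R] (θ : RingAut R)

theorem one_def : (1 : SkewPoly R θ) = SkewPoly.ofFinsupp (Finsupp.single 0 1) := rfl

theorem single_mul_single (i j : ℕ) (a b : R) :
    (SkewPoly.ofFinsupp (Finsupp.single i a) : SkewPoly R θ) *
      SkewPoly.ofFinsupp (Finsupp.single j b) =
      SkewPoly.ofFinsupp (Finsupp.single (i + j) (a * (θ ^ i) b)) :=
  SkewPoly.mulAux_single_single θ i j a b

theorem X_pow (k : ℕ) :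
    (SkewPoly.X θ) ^ k = SkewPoly.ofFinsupp (Finsupp.single k (1 : R)) := by
  induction k with
  | zero => rw [pow_zero]; rfl
  | succ k ih =>
      rw [pow_succ, ih, SkewPoly.X, single_mul_single]
      simp

end Generic

section DN

variable {p : ℕ} (θ : RingAut (DualNumber (ZMod p)))

theorem theta_inl [NeZero p] (s : ZMod p) : θ (inl s) = inl s := by
  have h1 : (inl s : DualNumber (ZMod p)) = ((s.val : ℕ) : DualNumber (ZMod p)) := by
    rw [← inl_natCast]
    exact congrArg _ (ZMod.natCast_rightInverse s).symm
  rw [h1, map_natCast, ← inl_natCast, ZMod.natCast_rightInverse s]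

theorem theta_pow_inl [NeZero p] (i : ℕ) (s : ZMod p) : (θ ^ i) (inl s) = inl s := by
  induction i with
  | zero => rw [pow_zero, RingAut.one_apply']
  | succ i ih =>
      rw [pow_succ]
      show (θ ^ i) (θ (inl s)) = _
      rw [theta_inl θ s]
      exact ih

theorem theta_eps [Fact p.Prime] : θ (DualNumber.eps) = inr ((θ DualNumber.eps).snd) := by
  have h2 : θ DualNumber.eps * θ DualNumber.eps = 0 := by
    rw [← map_mul, DualNumber.eps_mul_eps, map_zero]
  have h3 : (θ DualNumber.eps).fst = 0 := by
    have h4 := congrArg fst h2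
    rw [fst_mul, fst_zero] at h4
    exact mul_self_eq_zero.mp h4
  conv_lhs => rw [← inl_fst_add_inr_snd_eq (θ DualNumber.eps)]
  rw [h3, inl_zero, zero_add]

theorem snd_theta_eps_ne [Fact p.Prime] : (θ DualNumber.eps).snd ≠ 0 := by
  intro h
  have h0 : θ DualNumber.eps = 0 := by rw [theta_eps, h, inr_zero]
  have h1 : (DualNumber.eps : DualNumber (ZMod p)) = 0 := by
    have := θ.injective (a₁ := DualNumber.eps) (a₂ := 0)
    exact this (by rw [h0, map_zero])
  have h2 : (1 : ZMod p) = 0 := by simpa using congrArg snd h1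
  exact one_ne_zero h2

theorem theta_inr [Fact p.Prime] (s : ZMod p) :
    θ (inr s) = inr (s * (θ DualNumber.eps).snd) := by
  have h1 : (inr s : DualNumber (ZMod p)) = inl s * DualNumber.eps := by
    rw [DualNumber.eps, inl_mul_inr, smul_eq_mul, mul_one]
  rw [h1, map_mul, theta_inl, theta_eps, inl_mul_inr, smul_eq_mul]
  simp

theorem theta_pow_inr [Fact p.Prime] (i : ℕ) :
    ∀ s : ZMod p, (θ ^ i) (inr s) = inr (s * (θ DualNumber.eps).snd ^ i) := by
  induction i with
  | zero => intro s; rw [pow_zero, RingAut.one_apply', pow_zero, mul_one]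
  | succ i ih =>
      intro s
      rw [pow_succ]
      show (θ ^ i) (θ (inr s)) = _
      rw [theta_inr, ih]
      congr 1
      rw [pow_succ]
      ring

theorem mul_inr (x : DualNumber (ZMod p)) (c : ZMod p) : x * inr c = inr (x.fst * c) := by
  apply TrivSqZeroExt.ext <;> simp [fst_mul, snd_mul, op_smul_eq_mul, mul_comm]

theorem inr_mul_inl (s b : ZMod p) : (inr s * inl b : DualNumber (ZMod p)) = inr (s * b) := by
  apply TrivSqZeroExt.ext <;> simp [fst_mul, snd_mul, op_smul_eq_mul, mul_comm]

theorem mul_inl (x : DualNumber (ZMod p)) (b : ZMod p) :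
    x * inl b = inl (x.fst * b) + inr (x.snd * b) := by
  apply TrivSqZeroExt.ext <;> simp [fst_mul, snd_mul, op_smul_eq_mul, mul_comm]

/-- `u·g(x)` as a skew polynomial: coefficientwise `inr`. -/
noncomputable def E (g : Polynomial (ZMod p)) : SkewPoly (DualNumber (ZMod p)) θ :=
  SkewPoly.ofFinsupp (Finsupp.mapRange inr (inr_zero (ZMod p)) g.toFinsupp.coeff)

theorem E_add (g h : Polynomial (ZMod p)) : E θ (g + h) = E θ g + E θ h := by
  unfold E
  rw [Polynomial.toFinsupp_add, AddMonoidAlgebra.coeff_add, Finsupp.mapRange_add (fun x y => inr_add (ZMod p) x y)]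
  rfl

/-- `E` as an additive monoid hom. -/
noncomputable def Ehom : Polynomial (ZMod p) →+ SkewPoly (DualNumber (ZMod p)) θ :=
  AddMonoidHom.mk' (E θ) (E_add θ)

theorem Ehom_apply (g : Polynomial (ZMod p)) : Ehom θ g = E θ g := rfl

theorem E_zero : E θ (0 : Polynomial (ZMod p)) = 0 := map_zero (Ehom θ)

theorem E_sub (g h : Polynomial (ZMod p)) : E θ (g - h) = E θ g - E θ h :=
  map_sub (Ehom θ) g h

theorem E_monomial (j : ℕ) (b : ZMod p) :
    E θ (monomial j b) = SkewPoly.ofFinsupp (Finsupp.single j (inr b)) := by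
  unfold E
  rw [toFinsupp_monomial, AddMonoidAlgebra.coeff_single, Finsupp.mapRange_single]

theorem ofPoly_monomial (j : ℕ) (b : ZMod p) :
    SkewPoly.ofPoly θ (monomial j b) = SkewPoly.ofFinsupp (Finsupp.single j (inl b)) := by
  unfold SkewPoly.ofPoly
  rw [toFinsupp_monomial, AddMonoidAlgebra.coeff_single, Finsupp.mapRange_single]

/-- The `snd`-part of a skew polynomial, as an ordinary polynomial. -/
noncomputable def sndPoly (f : SkewPoly (DualNumber (ZMod p)) θ) : Polynomial (ZMod p) :=
  Polynomial.ofFinsupp (AddMonoidAlgebra.ofCoeff (Finsupp.mapRange snd snd_zero (SkewPoly.toFinsupp f)))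

theorem sndPoly_E (g : Polynomial (ZMod p)) : sndPoly θ (E θ g) = g := by
  ext k
  simp [sndPoly, E, Polynomial.coeff, SkewPoly.toFinsupp, SkewPoly.ofFinsupp,
    Finsupp.mapRange_apply]

theorem fstPoly_ofPoly (g : Polynomial (ZMod p)) :
    SkewPoly.fstPoly (SkewPoly.ofPoly θ g) = g := by
  ext k
  simp [SkewPoly.fstPoly, SkewPoly.ofPoly, Polynomial.coeff, SkewPoly.toFinsupp,
    SkewPoly.ofFinsupp, Finsupp.mapRange_apply]

theorem sndPoly_single (i : ℕ) (a : DualNumber (ZMod p)) :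
    sndPoly θ (SkewPoly.ofFinsupp (Finsupp.single i a)) = monomial i a.snd := by
  unfold sndPoly
  rw [show SkewPoly.toFinsupp (SkewPoly.ofFinsupp (θ := θ) (Finsupp.single i a)) =
    Finsupp.single i a from rfl, Finsupp.mapRange_single, ← AddMonoidAlgebra.coeff_single,
    AddMonoidAlgebra.ofCoeff_coeff, ← toFinsupp_monomial]

theorem sndPoly_add (f g : SkewPoly (DualNumber (ZMod p)) θ) :
    sndPoly θ (f + g) = sndPoly θ f + sndPoly θ g := by
  unfold sndPoly
  rw [show SkewPoly.toFinsupp (f + g) = SkewPoly.toFinsupp f + SkewPoly.toFinsupp g from rfl,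
    Finsupp.mapRange_add snd_add]
  exact Polynomial.ofFinsupp_add

/-- Scale the `i`-th coefficient by `c^i` (i.e. `g(x) ↦ g(cx)`). -/
noncomputable def twist (c : ZMod p) (g : Polynomial (ZMod p)) : Polynomial (ZMod p) :=
  ∑ i ∈ g.support, monomial i (g.coeff i * c ^ i)

theorem coeff_twist (c : ZMod p) (g : Polynomial (ZMod p)) (k : ℕ) :
    (twist c g).coeff k = g.coeff k * c ^ k := by
  unfold twist
  rw [finset_sum_coeff]
  simp only [coeff_monomial]
  rw [Finset.sum_ite_eq' g.support k (fun i => g.coeff i * c ^ i)]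
  split_ifs with hk
  · rfl
  · rw [Polynomial.notMem_support_iff.mp hk, zero_mul]

theorem twist_add (c : ZMod p) (g h : Polynomial (ZMod p)) :
    twist c (g + h) = twist c g + twist c h := by
  ext k
  simp [coeff_twist, add_mul]

theorem twist_zero (c : ZMod p) : twist c 0 = 0 := by
  ext k
  simp [coeff_twist]

theorem twist_monomial (c : ZMod p) (i : ℕ) (s : ZMod p) :
    twist c (monomial i s) = monomial i (s * c ^ i) := by
  ext k
  rw [coeff_twist, coeff_monomial, coeff_monomial]
  split_ifs with h
  · subst h; rfl
  · rw [zero_mul]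

theorem twist_twist_inv [Fact p.Prime] {c : ZMod p} (hc : c ≠ 0) (g : Polynomial (ZMod p)) :
    twist c (twist c⁻¹ g) = g := by
  ext k
  rw [coeff_twist, coeff_twist, mul_assoc, ← mul_pow, inv_mul_cancel₀ hc, one_pow, mul_one]

theorem fstPoly_add_fs (f g : ℕ →₀ DualNumber (ZMod p)) :
    SkewPoly.fstPoly (θ := θ) (SkewPoly.ofFinsupp (f + g)) =
      SkewPoly.fstPoly (θ := θ) (SkewPoly.ofFinsupp f)
        + SkewPoly.fstPoly (θ := θ) (SkewPoly.ofFinsupp g) := by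
  unfold SkewPoly.fstPoly
  rw [show SkewPoly.toFinsupp (SkewPoly.ofFinsupp (θ := θ) (f + g)) = f + g from rfl,
    Finsupp.mapRange_add fst_add]
  exact Polynomial.ofFinsupp_add

theorem fstPoly_single (i : ℕ) (a : DualNumber (ZMod p)) :
    SkewPoly.fstPoly (θ := θ) (SkewPoly.ofFinsupp (Finsupp.single i a)) = monomial i a.fst := by
  unfold SkewPoly.fstPoly
  rw [show SkewPoly.toFinsupp (SkewPoly.ofFinsupp (θ := θ) (Finsupp.single i a)) =
    Finsupp.single i a from rfl, Finsupp.mapRange_single, ← AddMonoidAlgebra.coeff_single,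
    AddMonoidAlgebra.ofCoeff_coeff, ← toFinsupp_monomial]

/-- Product of a monomial with a `u`-polynomial. -/
theorem single_mul_E [Fact p.Prime] (i : ℕ) (a : DualNumber (ZMod p)) (h : Polynomial (ZMod p)) :
    (SkewPoly.ofFinsupp (Finsupp.single i a) : SkewPoly (DualNumber (ZMod p)) θ) * E θ h =
      E θ (monomial i (a.fst * (θ DualNumber.eps).snd ^ i) * h) := by
  induction h using Polynomial.induction_on' with
  | add f g hf hg => rw [E_add, mul_add, hf, hg, mul_add, E_add]
  | monomial j b =>
      rw [E_monomial, single_mul_single, theta_pow_inr, mul_inr, monomial_mul_monomial,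
        E_monomial]
      congr 2
      ring

theorem mul_E_aux [Fact p.Prime] (f : ℕ →₀ DualNumber (ZMod p)) (h : Polynomial (ZMod p)) :
    (SkewPoly.ofFinsupp f : SkewPoly (DualNumber (ZMod p)) θ) * E θ h =
      E θ (twist (θ DualNumber.eps).snd
        (SkewPoly.fstPoly (θ := θ) (SkewPoly.ofFinsupp f)) * h) := by
  induction f using Finsupp.induction_linear with
  | zero =>
      have h1 : SkewPoly.fstPoly (θ := θ) (SkewPoly.ofFinsupp (0 : ℕ →₀ _)) = 0 := by
        unfold SkewPoly.fstPoly
        rw [show SkewPoly.toFinsupp (SkewPoly.ofFinsupp (θ := θ) (0 : ℕ →₀ _)) = 0 from rfl,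
          Finsupp.mapRange_zero]
        rfl
      rw [h1, twist_zero, zero_mul, E_zero]
      exact zero_mul _
  | add f g hf hg =>
      rw [fstPoly_add_fs, twist_add, add_mul, E_add, ← hf, ← hg,
        show SkewPoly.ofFinsupp (f + g) = (SkewPoly.ofFinsupp f + SkewPoly.ofFinsupp g :
          SkewPoly (DualNumber (ZMod p)) θ) from rfl, add_mul]
  | single i a =>
      rw [single_mul_E, fstPoly_single, twist_monomial]

/-- General product with a `u`-polynomial: only the `fst`-part acts, twisted. -/
theorem mul_E [Fact p.Prime] (f : SkewPoly (DualNumber (ZMod p)) θ) (h : Polynomial (ZMod p)) :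
    f * E θ h = E θ (twist (θ DualNumber.eps).snd (SkewPoly.fstPoly f) * h) :=
  mul_E_aux θ (SkewPoly.toFinsupp f) h

/-- Product of a `u`-polynomial with an `F_p`-polynomial: untwisted. -/
theorem ofPoly_add' (g h : Polynomial (ZMod p)) :
    SkewPoly.ofPoly θ (g + h) = SkewPoly.ofPoly θ g + SkewPoly.ofPoly θ h := by
  unfold SkewPoly.ofPoly
  rw [Polynomial.toFinsupp_add, AddMonoidAlgebra.coeff_add, Finsupp.mapRange_add (fun x y => inl_add (M := ZMod p) x y)]
  rfl

theorem E_mul_ofPoly [NeZero p] (q g : Polynomial (ZMod p)) :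
    E θ q * SkewPoly.ofPoly θ g = E θ (q * g) := by
  induction q using Polynomial.induction_on' with
  | add f f' hf hf' => rw [E_add, add_mul, hf, hf', add_mul, E_add]
  | monomial i s =>
      induction g using Polynomial.induction_on' with
      | add g g' hg hg' => rw [ofPoly_add', mul_add, hg, hg', mul_add, E_add]
      | monomial j b =>
          rw [E_monomial, ofPoly_monomial, single_mul_single, theta_pow_inl, inr_mul_inl,
            monomial_mul_monomial, E_monomial]

theorem sndPoly_zero : sndPoly θ (0 : SkewPoly (DualNumber (ZMod p)) θ) = 0 := by
  unfold sndPoly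
  rw [show SkewPoly.toFinsupp (0 : SkewPoly (DualNumber (ZMod p)) θ) = 0 from rfl,
    Finsupp.mapRange_zero]
  rfl

theorem snd_mul_inl (x : DualNumber (ZMod p)) (b : ZMod p) : (x * inl b).snd = x.snd * b := by
  simp [snd_mul, op_smul_eq_mul]

theorem sndPoly_mul_ofPoly_aux [NeZero p] (f : ℕ →₀ DualNumber (ZMod p))
    (g : Polynomial (ZMod p)) :
    sndPoly θ ((SkewPoly.ofFinsupp f : SkewPoly (DualNumber (ZMod p)) θ) *
        SkewPoly.ofPoly θ g) =
      sndPoly θ (SkewPoly.ofFinsupp f) * g := by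
  induction f using Finsupp.induction_linear with
  | zero =>
      rw [show (SkewPoly.ofFinsupp (0 : ℕ →₀ _) : SkewPoly (DualNumber (ZMod p)) θ) = 0 from rfl,
        zero_mul, sndPoly_zero, zero_mul]
  | add f f' hf hf' =>
      rw [show SkewPoly.ofFinsupp (f + f') = (SkewPoly.ofFinsupp f + SkewPoly.ofFinsupp f' :
        SkewPoly (DualNumber (ZMod p)) θ) from rfl, add_mul, sndPoly_add, hf, hf',
        sndPoly_add, add_mul]
  | single i a =>
      induction g using Polynomial.induction_on' with
      | add g₁ g₂ h1 h2 => rw [ofPoly_add', mul_add, sndPoly_add, h1, h2, mul_add]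
      | monomial j b =>
          rw [ofPoly_monomial, single_mul_single, theta_pow_inl, sndPoly_single,
            sndPoly_single, snd_mul_inl, monomial_mul_monomial]

theorem sndPoly_mul_ofPoly [NeZero p] (f : SkewPoly (DualNumber (ZMod p)) θ)
    (g : Polynomial (ZMod p)) :
    sndPoly θ (f * SkewPoly.ofPoly θ g) = sndPoly θ f * g :=
  sndPoly_mul_ofPoly_aux θ (SkewPoly.toFinsupp f) g

theorem ofPoly_Xn (n : ℕ) :
    SkewPoly.ofPoly θ (Polynomial.X ^ n - 1 : Polynomial (ZMod p)) = SkewPoly.X θ ^ n - 1 := by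
  have h1 : (Polynomial.X ^ n - 1 : Polynomial (ZMod p)) = monomial n 1 - monomial 0 1 := by
    rw [X_pow_eq_monomial, monomial_zero_one]
  have hsub : ∀ g h : Polynomial (ZMod p),
      SkewPoly.ofPoly θ (g - h) = SkewPoly.ofPoly θ g - SkewPoly.ofPoly θ h :=
    map_sub (AddMonoidHom.mk' (SkewPoly.ofPoly θ) (ofPoly_add' θ))
  rw [h1, hsub, ofPoly_monomial, ofPoly_monomial, inl_one, ← X_pow, one_def]

theorem E_mem_span [Fact p.Prime] (n : ℕ) (g : Polynomial (ZMod p)) :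
    E θ g ∈ Ideal.span {SkewPoly.X θ ^ n - 1} ↔
      (Polynomial.X ^ n - 1 : Polynomial (ZMod p)) ∣ g := by
  constructor
  · intro hg
    obtain ⟨f, hf⟩ := Submodule.mem_span_singleton.mp hg
    rw [smul_eq_mul, ← ofPoly_Xn] at hf
    have h2 := congrArg (sndPoly θ) hf
    rw [sndPoly_mul_ofPoly, sndPoly_E] at h2
    exact ⟨sndPoly θ f, by rw [← h2, mul_comm]⟩
  · rintro ⟨q, hq⟩
    refine Submodule.mem_span_singleton.mpr ⟨E θ q, ?_⟩
    rw [smul_eq_mul, ← ofPoly_Xn, E_mul_ofPoly, mul_comm, ← hq]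

end DN

end SkewHelper


open SkewPoly DualNumber in
/-- For the code `C = ⟨u ā(x)⟩` with `ā` monic of degree `r` dividing
`xⁿ - 1` in `F_p[x]`, the set `β = {u ā, x·u ā, …, x^{n-r-1}·u ā}` is a
minimal generating set over `F_p` (every codeword has a unique representation
as an `F_p`-combination of `β`), and `|C| = p^{n-r}`. -/
theorem skew_code_u_generating_set (p : ℕ) (hp : p.Prime) (hodd : p ≠ 2)
    (θ : RingAut (DualNumber (ZMod p))) (n : ℕ) (hn : 0 < n)
    (abar : Polynomial (ZMod p)) (habar : abar.Monic) (r : ℕ)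
    (hr : abar.natDegree = r) (hrn : r ≤ n)
    (hdvd : abar ∣ (Polynomial.X ^ n - 1 : Polynomial (ZMod p)))
    (Code : Submodule (SkewPoly (DualNumber (ZMod p)) θ)
      (SkewPoly (DualNumber (ZMod p)) θ ⧸ Ideal.span {SkewPoly.X θ ^ n - 1}))
    (hCode : Code = Submodule.span (SkewPoly (DualNumber (ZMod p)) θ)
      {(Ideal.span {SkewPoly.X θ ^ n - 1}).mkQ (SkewPoly.C θ ε * SkewPoly.ofPoly θ abar)}) :
    (∀ x : SkewPoly (DualNumber (ZMod p)) θ ⧸ Ideal.span {SkewPoly.X θ ^ n - 1},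
      x ∈ Code ↔ ∃! c : Fin (n - r) → ZMod p,
        x = (Ideal.span {SkewPoly.X θ ^ n - 1}).mkQ
          (∑ i : Fin (n - r), SkewPoly.C θ (TrivSqZeroExt.inl (c i)) *
            SkewPoly.X θ ^ (i : ℕ) * (SkewPoly.C θ ε * SkewPoly.ofPoly θ abar))) ∧
    Nat.card Code = p ^ (n - r) := by
  haveI : Fact p.Prime := ⟨hp⟩
  have ht : (θ DualNumber.eps).snd ≠ 0 := SkewHelper.snd_theta_eps_ne θ
  have hXmonic : (Polynomial.X ^ n - 1 : Polynomial (ZMod p)).Monic := by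
    have h := Polynomial.monic_X_pow_sub_C (1 : ZMod p) hn.ne'
    rwa [Polynomial.C_1] at h
  have hXdeg : (Polynomial.X ^ n - 1 : Polynomial (ZMod p)).natDegree = n := by
    have h := Polynomial.natDegree_X_pow_sub_C (n := n) (r := (1 : ZMod p))
    rwa [Polynomial.C_1] at h
  have habar0 : abar ≠ 0 := habar.ne_zero
  have quotEq : ∀ g₁ g₂ : Polynomial (ZMod p),
      (Ideal.span {SkewPoly.X θ ^ n - 1}).mkQ (SkewHelper.E θ g₁) = (Ideal.span {SkewPoly.X θ ^ n - 1}).mkQ (SkewHelper.E θ g₂) ↔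
        (Polynomial.X ^ n - 1 : Polynomial (ZMod p)) ∣ (g₁ - g₂) := by
    intro g₁ g₂
    rw [Submodule.mkQ_apply, Submodule.mkQ_apply, Submodule.Quotient.eq,
      ← SkewHelper.E_sub]
    exact SkewHelper.E_mem_span θ n _
  set P : (Fin (n - r) → ZMod p) → Polynomial (ZMod p) :=
    fun c => ∑ i : Fin (n - r),
      Polynomial.monomial (i : ℕ) (c i * (θ DualNumber.eps).snd ^ (i : ℕ)) with hP
  have coeffP : ∀ (c : Fin (n - r) → ZMod p) (k : ℕ),
      (P c).coeff k =
        if hk : k < n - r then c ⟨k, hk⟩ * (θ DualNumber.eps).snd ^ k else 0 := by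
    intro c k
    rw [hP]
    rw [Polynomial.finset_sum_coeff]
    simp only [Polynomial.coeff_monomial]
    split_ifs with hk
    · rw [Finset.sum_eq_single (⟨k, hk⟩ : Fin (n - r))]
      · simp
      · intro i _ hik
        exact if_neg (fun h => hik (Fin.ext h))
      · intro habs; exact absurd (Finset.mem_univ _) habs
    · apply Finset.sum_eq_zero
      intro i _
      refine if_neg fun h => hk ?_
      omega
  have hgen : SkewPoly.C θ DualNumber.eps * SkewPoly.ofPoly θ abar =
      SkewHelper.E θ abar := by
    have h1 : SkewPoly.C θ DualNumber.eps = SkewHelper.E θ 1 := by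
      rw [← Polynomial.monomial_zero_one, SkewHelper.E_monomial]
      rfl
    rw [h1, SkewHelper.E_mul_ofPoly, one_mul]
  have Scalc : ∀ c : Fin (n - r) → ZMod p,
      (∑ i : Fin (n - r), SkewPoly.C θ (TrivSqZeroExt.inl (c i)) * SkewPoly.X θ ^ (i : ℕ) *
        (SkewPoly.C θ DualNumber.eps * SkewPoly.ofPoly θ abar)) =
      SkewHelper.E θ (P c * abar) := by
    intro c
    have hterm : ∀ i : Fin (n - r),
        SkewPoly.C θ (TrivSqZeroExt.inl (c i)) * SkewPoly.X θ ^ (i : ℕ) *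
          (SkewPoly.C θ DualNumber.eps * SkewPoly.ofPoly θ abar) =
        SkewHelper.E θ
          (Polynomial.monomial (i : ℕ) (c i * (θ DualNumber.eps).snd ^ (i : ℕ)) * abar) := by
      intro i
      have h2 : SkewPoly.C θ (TrivSqZeroExt.inl (c i)) * SkewPoly.X θ ^ (i : ℕ) =
          SkewPoly.ofFinsupp (Finsupp.single (i : ℕ) (TrivSqZeroExt.inl (c i))) := by
        rw [SkewHelper.X_pow,
          show SkewPoly.C θ (TrivSqZeroExt.inl (c i)) =
            SkewPoly.ofFinsupp (Finsupp.single 0 (TrivSqZeroExt.inl (c i))) from rfl,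
          SkewHelper.single_mul_single]
        simp
      rw [hgen, h2, SkewHelper.single_mul_E, TrivSqZeroExt.fst_inl]
    rw [Finset.sum_congr rfl (fun i _ => hterm i), Finset.sum_mul]
    exact (map_sum (SkewHelper.Ehom θ) _ _).symm
  have memS : ∀ c : Fin (n - r) → ZMod p, (Ideal.span {SkewPoly.X θ ^ n - 1}).mkQ (SkewHelper.E θ (P c * abar)) ∈ Code := by
    intro c
    rw [hCode]
    refine Submodule.mem_span_singleton.mpr
      ⟨SkewPoly.ofPoly θ (SkewHelper.twist ((θ DualNumber.eps).snd)⁻¹ (P c)), ?_⟩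
    rw [hgen, ← map_smul, smul_eq_mul, SkewHelper.mul_E, SkewHelper.fstPoly_ofPoly]
    rw [show SkewHelper.twist (θ DualNumber.eps).snd
        (SkewHelper.twist ((θ DualNumber.eps).snd)⁻¹ (P c)) = P c from
      SkewHelper.twist_twist_inv ht (P c)]
  have Exis : ∀ h : Polynomial (ZMod p), ∃ c : Fin (n - r) → ZMod p,
      (Ideal.span {SkewPoly.X θ ^ n - 1}).mkQ (SkewHelper.E θ (h * abar)) = (Ideal.span {SkewPoly.X θ ^ n - 1}).mkQ (SkewHelper.E θ (P c * abar)) := by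
    intro h
    obtain ⟨e, he⟩ : abar ∣ (h * abar) %ₘ (Polynomial.X ^ n - 1) := by
      rw [Polynomial.modByMonic_eq_sub_mul_div _ _]
      exact dvd_sub (dvd_mul_left abar h) (hdvd.mul_right _)
    have hco : ∀ k, n - r ≤ k → e.coeff k = 0 := by
      intro k hk
      rcases eq_or_ne e 0 with h0 | h0
      · rw [h0, Polynomial.coeff_zero]
      · apply Polynomial.coeff_eq_zero_of_natDegree_lt
        have hd0 : (h * abar) %ₘ (Polynomial.X ^ n - 1) ≠ 0 := by
          rw [he]; exact mul_ne_zero habar0 h0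
        have hdn : ((h * abar) %ₘ (Polynomial.X ^ n - 1)).natDegree < n := by
          have h2 := Polynomial.degree_modByMonic_lt (h * abar) hXmonic
          rw [Polynomial.degree_eq_natDegree hd0,
            Polynomial.degree_eq_natDegree hXmonic.ne_zero] at h2
          have h3 : ((h * abar) %ₘ (Polynomial.X ^ n - 1)).natDegree <
              (Polynomial.X ^ n - 1 : Polynomial (ZMod p)).natDegree := by exact_mod_cast h2
          omega
        rw [he, Polynomial.natDegree_mul habar0 h0, hr] at hdn
        omega
    refine ⟨fun i => e.coeff i * ((θ DualNumber.eps).snd ^ (i : ℕ))⁻¹, ?_⟩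
    have hPe : P (fun i => e.coeff i * ((θ DualNumber.eps).snd ^ (i : ℕ))⁻¹) = e := by
      ext k
      rw [coeffP]
      split_ifs with hk
      · show e.coeff k * ((θ DualNumber.eps).snd ^ k)⁻¹ * (θ DualNumber.eps).snd ^ k =
          e.coeff k
        rw [mul_assoc, inv_mul_cancel₀ (pow_ne_zero k ht), mul_one]
      · exact (hco k (le_of_not_gt hk)).symm
    rw [hPe, quotEq]
    have h4 : e * abar = (h * abar) %ₘ (Polynomial.X ^ n - 1) := by rw [he, mul_comm]
    rw [h4, Polynomial.modByMonic_eq_sub_mul_div _ _, sub_sub_cancel]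
    exact Dvd.intro _ rfl
  have Uniq : ∀ c c' : Fin (n - r) → ZMod p,
      (Ideal.span {SkewPoly.X θ ^ n - 1}).mkQ (SkewHelper.E θ (P c * abar)) = (Ideal.span {SkewPoly.X θ ^ n - 1}).mkQ (SkewHelper.E θ (P c' * abar)) →
        c = c' := by
    intro c c' hcc
    by_contra hne
    obtain ⟨i, hi⟩ := Function.ne_iff.mp hne
    rw [quotEq, ← sub_mul] at hcc
    have hD : P c - P c' ≠ 0 := by
      intro h0
      have h1 := congrArg (fun q => Polynomial.coeff q (i : ℕ)) h0
      simp only [Polynomial.coeff_sub, Polynomial.coeff_zero] at h1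
      rw [coeffP, coeffP, dif_pos i.isLt, dif_pos i.isLt, ← sub_mul] at h1
      exact (mul_ne_zero (sub_ne_zero.mpr hi) (pow_ne_zero _ ht)) h1
    have hDlt : (P c - P c').natDegree < n - r := by
      by_contra hge
      push_neg at hge
      have h2 : (P c - P c').coeff ((P c - P c').natDegree) = 0 := by
        rw [Polynomial.coeff_sub, coeffP, coeffP, dif_neg (by omega), dif_neg (by omega),
          sub_zero]
      exact (Polynomial.leadingCoeff_ne_zero.mpr hD) h2
    have hDa : (P c - P c') * abar ≠ 0 := mul_ne_zero hD habar0
    have h3 : n ≤ ((P c - P c') * abar).natDegree := by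
      have h4 := Polynomial.natDegree_le_of_dvd hcc hDa
      rwa [hXdeg] at h4
    rw [Polynomial.natDegree_mul hD habar0, hr] at h3
    omega
  have Surj : ∀ x, x ∈ Code → ∃ c : Fin (n - r) → ZMod p,
      x = (Ideal.span {SkewPoly.X θ ^ n - 1}).mkQ (SkewHelper.E θ (P c * abar)) := by
    intro x hx
    rw [hCode] at hx
    obtain ⟨f, hf⟩ := Submodule.mem_span_singleton.mp hx
    have h1 : x = (Ideal.span {SkewPoly.X θ ^ n - 1}).mkQ (SkewHelper.E θ
        (SkewHelper.twist ((θ DualNumber.eps).snd) (SkewPoly.fstPoly f) * abar)) := by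
      rw [← hf, hgen, ← map_smul, smul_eq_mul, SkewHelper.mul_E]
    obtain ⟨c, hc⟩ := Exis (SkewHelper.twist ((θ DualNumber.eps).snd) (SkewPoly.fstPoly f))
    exact ⟨c, h1.trans hc⟩
  constructor
  · intro x
    constructor
    · intro hx
      obtain ⟨c, hc⟩ := Surj x hx
      refine ⟨c, by simp only [Scalc]; exact hc, ?_⟩
      intro c' hc'
      simp only [Scalc] at hc'
      exact Uniq c' c (hc'.symm.trans hc)
    · rintro ⟨c, hc, -⟩
      rw [hc, Scalc c]
      exact memS c
  · have hbij : Function.Bijective (fun c : Fin (n - r) → ZMod p =>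
        (⟨(Ideal.span {SkewPoly.X θ ^ n - 1}).mkQ (SkewHelper.E θ (P c * abar)), memS c⟩ : Code)) := by
      constructor
      · intro c c' h
        exact Uniq c c' (congrArg Subtype.val h)
      · rintro ⟨x, hx⟩
        obtain ⟨c, hc⟩ := Surj x hx
        exact ⟨c, Subtype.ext hc.symm⟩
    rw [← Nat.card_eq_of_bijective _ hbij]
    simp [Nat.card_eq_fintype_card]
end

section
/- Let p be an odd prime and C = ⟨g(x)⟩ a skew cyclic code of length n over R = F_p[u]/(u^2), where g(x) ∈ R[x;θ] is monic of degree r and x^n − 1 = k(x) ∗ g(x) in R[x;θ]. Then β = { g(x), x∗g(x), ..., x^{n−r−1}∗g(x) } is a minimal generating set for C over R, and |C| = p^{2(n−r)}. -/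
open TrivSqZeroExt

namespace SkewPoly

variable {R : Type*} [Ring R] {θ : RingAut R}

theorem coeff_mul' (f g : SkewPoly R θ) (m : ℕ) :
    (f * g).coeff m = ∑ i ∈ Finset.range (m + 1), f.coeff i * (θ ^ i) (g.coeff (m - i)) := by
  classical
  have h1 : (f * g).coeff m = (toFinsupp f).sum fun i a =>
      (toFinsupp g).sum fun j b => if i + j = m then a * (θ ^ i) b else 0 := by
    show mulAux θ (toFinsupp f) (toFinsupp g) m = _
    unfold mulAux
    rw [Finsupp.sum_apply]
    refine Finsupp.sum_congr fun i _ => ?_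
    rw [Finsupp.sum_apply]
    refine Finsupp.sum_congr fun j _ => ?_
    rw [Finsupp.single_apply]
  rw [h1]
  have h2 : ∀ i a, ((toFinsupp g).sum fun j b => if i + j = m then a * (θ ^ i) b else 0)
      = if i ≤ m then a * (θ ^ i) (toFinsupp g (m - i)) else 0 := by
    intro i a
    by_cases him : i ≤ m
    · rw [if_pos him]
      have : ((toFinsupp g).sum fun j b => if i + j = m then a * (θ ^ i) b else 0)
          = (toFinsupp g).sum fun j b => if j = m - i then a * (θ ^ i) b else 0 := by
        refine Finsupp.sum_congr fun j _ => ?_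
        congr 1
        simp only [eq_iff_iff]
        omega
      rw [this]
      by_cases hmem : m - i ∈ (toFinsupp g).support
      · rw [Finsupp.sum_ite_eq' (toFinsupp g) (m - i) (fun _ b => a * (θ ^ i) b), if_pos hmem]
      · rw [Finsupp.sum_ite_eq' (toFinsupp g) (m - i) (fun _ b => a * (θ ^ i) b), if_neg hmem]
        rw [Finsupp.notMem_support_iff.1 hmem]
        simp
    · rw [if_neg him]
      rw [Finsupp.sum]
      apply Finset.sum_eq_zero
      intro j _
      rw [if_neg (by omega)]
  simp only [h2]
  set F : ℕ → R := fun i => if i ≤ m then toFinsupp f i * (θ ^ i) (toFinsupp g (m - i)) else 0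
    with hF
  have hl : ((toFinsupp f).sum fun i a => if i ≤ m then a * (θ ^ i) (toFinsupp g (m - i)) else 0)
      = ∑ i ∈ (toFinsupp f).support ∪ Finset.range (m + 1), F i := by
    rw [Finsupp.sum]
    apply Finset.sum_subset Finset.subset_union_left
    intro i _ hi
    simp [hF, Finsupp.notMem_support_iff.1 hi]
  have hrr : (∑ i ∈ Finset.range (m + 1), f.coeff i * (θ ^ i) (g.coeff (m - i)))
      = ∑ i ∈ (toFinsupp f).support ∪ Finset.range (m + 1), F i := by
    rw [show (∑ i ∈ Finset.range (m + 1), f.coeff i * (θ ^ i) (g.coeff (m - i)))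
        = ∑ i ∈ Finset.range (m + 1), F i from
      Finset.sum_congr rfl fun i hi => by
        simp only [hF]
        rw [if_pos (Nat.lt_succ_iff.1 (Finset.mem_range.1 hi))]
        rfl]
    apply Finset.sum_subset Finset.subset_union_right
    intro i _ hi
    simp only [hF]
    rw [if_neg (by simp at hi; omega)]
  rw [hl, hrr]

end SkewPoly

namespace SkewPoly

variable {R : Type*} [Ring R] {θ : RingAut R}

theorem coeff_zero' (m : ℕ) : (0 : SkewPoly R θ).coeff m = 0 := rfl

theorem coeff_sub' (f g : SkewPoly R θ) (m : ℕ) :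
    (f - g).coeff m = f.coeff m - g.coeff m := rfl

theorem coeff_mul_eq_zero' {f g : SkewPoly R θ} {a b m : ℕ}
    (hf : ∀ i, a < i → f.coeff i = 0) (hg : ∀ j, b < j → g.coeff j = 0)
    (hm : a + b < m) : (f * g).coeff m = 0 := by
  rw [coeff_mul']
  apply Finset.sum_eq_zero
  intro i _
  by_cases h : i ≤ a
  · rw [hg (m - i) (by omega), map_zero, mul_zero]
  · rw [hf i (by omega), zero_mul]

theorem coeff_mul_top' {f g : SkewPoly R θ} {a b : ℕ}
    (hf : ∀ i, a < i → f.coeff i = 0) (hg : ∀ j, b < j → g.coeff j = 0) :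
    (f * g).coeff (a + b) = f.coeff a * (θ ^ a) (g.coeff b) := by
  rw [coeff_mul', Finset.sum_eq_single a]
  · rw [Nat.add_sub_cancel_left]
  · intro i hi hne
    by_cases h : i ≤ a
    · rw [hg (a + b - i) (by omega), map_zero, mul_zero]
    · rw [hf i (by omega), zero_mul]
  · intro h
    exact absurd (Finset.mem_range.2 (by omega)) h

theorem coeff_natDegree_lt' {f : SkewPoly R θ} {m : ℕ} (h : f.natDegree < m) :
    f.coeff m = 0 := by
  by_contra hne
  have hm : m ∈ (toFinsupp f).support := Finsupp.mem_support_iff.2 hne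
  have hle := Finset.le_max hm
  unfold natDegree degree at h
  cases hmax : (toFinsupp f).support.max with
  | bot => rw [hmax] at hle; exact absurd hle (by simp)
  | coe d =>
    rw [hmax] at hle h
    rw [WithBot.unbotD_coe] at h
    exact absurd (WithBot.coe_le_coe.1 hle) (by omega)

theorem coeff_natDegree_ne_zero'_s14 {f : SkewPoly R θ} (h : f ≠ 0) :
    f.coeff f.natDegree ≠ 0 := by
  have hs : (toFinsupp f).support.Nonempty := by
    rw [Finsupp.support_nonempty_iff]
    exact h
  obtain ⟨d, hd⟩ := Finset.max_of_nonempty hs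
  have hmem : d ∈ (toFinsupp f).support := Finset.mem_of_max hd
  have : f.natDegree = d := by unfold natDegree degree; rw [hd]; rfl
  rw [this]
  exact Finsupp.mem_support_iff.1 hmem

/-- right-cancellation by a "monic of degree r" polynomial -/
theorem right_cancel' {g : SkewPoly R θ} {r : ℕ} (hg1 : g.coeff r = 1)
    (hg0 : ∀ j, r < j → g.coeff j = 0) {f f' : SkewPoly R θ}
    (h : f * g = f' * g) : f = f' := by
  by_contra hne
  have hd : f - f' ≠ 0 := sub_ne_zero.2 hne
  have h0 : (f - f') * g = 0 := by rw [sub_mul, h, sub_self]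
  have := coeff_mul_top' (f := f - f') (g := g)
    (a := (f - f').natDegree) (b := r)
    (fun i hi => coeff_natDegree_lt' hi) hg0
  rw [h0, coeff_zero', hg1, map_one, mul_one] at this
  exact coeff_natDegree_ne_zero'_s14 hd this.symm

/-- division with remainder by a "monic of degree s" polynomial -/
theorem div_aux {k : SkewPoly R θ} {s : ℕ} (hk1 : k.coeff s = 1)
    (hk0 : ∀ j, s < j → k.coeff j = 0) :
    ∀ (N : ℕ) (f : SkewPoly R θ), (∀ m, N + s ≤ m → f.coeff m = 0) →
      ∃ q, ∀ m, s ≤ m → (f - q * k).coeff m = 0 := by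
  intro N
  induction N with
  | zero =>
    intro f hf
    refine ⟨0, fun m hm => ?_⟩
    rw [coeff_sub', show (0 : SkewPoly R θ) * k = 0 from zero_mul k, coeff_zero',
      sub_zero]
    exact hf m (by omega)
  | succ N ih =>
    intro f hf
    set c := f.coeff (N + s) with hc
    set u : SkewPoly R θ := ofFinsupp (Finsupp.single N c) with hu
    have hucoeff : ∀ i, u.coeff i = if N = i then c else 0 := fun i => Finsupp.single_apply
    have hu0 : ∀ i, N < i → u.coeff i = 0 := by
      intro i hi
      rw [hucoeff, if_neg (by omega)]
    have h1 : ∀ m, N + s ≤ m → (f - u * k).coeff m = 0 := by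
      intro m hm
      rcases eq_or_lt_of_le hm with heq | hlt
      · rw [coeff_sub', ← heq, ← hc,
          coeff_mul_top' hu0 hk0, hucoeff, if_pos rfl, hk1, map_one, mul_one, sub_self]
      · rw [coeff_sub', hf m (by omega), coeff_mul_eq_zero' hu0 hk0 hlt, sub_zero]
    obtain ⟨q', hq'⟩ := ih (f - u * k) h1
    refine ⟨q' + u, fun m hm => ?_⟩
    have : f - (q' + u) * k = f - u * k - q' * k := by rw [add_mul]; abel
    rw [this]
    exact hq' m hm

theorem X_pow_eq (i : ℕ) : (X θ ^ i : SkewPoly R θ) = ofFinsupp (Finsupp.single i 1) := by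
  induction i with
  | zero => rfl
  | succ i ih =>
    rw [pow_succ, ih]
    show mulAux θ (Finsupp.single i 1) (Finsupp.single 1 1) = _
    rw [mulAux_single_single]
    simp
    rfl

theorem C_mul_X_pow (a : R) (i : ℕ) :
    (C θ a * X θ ^ i : SkewPoly R θ) = ofFinsupp (Finsupp.single i a) := by
  rw [X_pow_eq]
  show mulAux θ (Finsupp.single 0 a) (Finsupp.single i 1) = _
  rw [mulAux_single_single]
  simp [RingAut.one_apply']
  rfl

theorem coeff_finsum {M : ℕ} (c : Fin M → R) (j : ℕ) :
    (∑ i : Fin M, (C θ (c i) * X θ ^ (i : ℕ) : SkewPoly R θ)).coeff j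
      = if h : j < M then c ⟨j, h⟩ else 0 := by
  simp only [C_mul_X_pow]
  have : (∑ i : Fin M, (ofFinsupp (Finsupp.single (i : ℕ) (c i)) : SkewPoly R θ)).coeff j
      = ∑ i : Fin M, (Finsupp.single (i : ℕ) (c i) : ℕ →₀ R) j := by
    show (∑ i : Fin M, (Finsupp.single (i : ℕ) (c i) : ℕ →₀ R)) j = _
    rw [Finset.sum_apply']
  rw [this]
  by_cases h : j < M
  · rw [dif_pos h, Finset.sum_eq_single (⟨j, h⟩ : Fin M)]
    · rw [Finsupp.single_apply, if_pos rfl]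
    · intro i _ hne
      rw [Finsupp.single_apply, if_neg (fun he => hne (Fin.ext he))]
    · simp
  · rw [dif_neg h]
    apply Finset.sum_eq_zero
    intro i _
    rw [Finsupp.single_apply, if_neg (by omega)]

theorem eq_sum_single' {f : SkewPoly R θ} {N : ℕ} (hf : ∀ m, N ≤ m → f.coeff m = 0) :
    f = ∑ i : Fin N, (C θ (f.coeff i) * X θ ^ (i : ℕ) : SkewPoly R θ) := by
  have key : ∀ j, f.coeff j = (∑ i : Fin N, (C θ (f.coeff i) * X θ ^ (i : ℕ) :
      SkewPoly R θ)).coeff j := by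
    intro j
    rw [coeff_finsum]
    by_cases h : j < N
    · rw [dif_pos h]
    · rw [dif_neg h, hf j (by omega)]
  exact Finsupp.ext key

end SkewPoly

/-- The `R`-linear combination `∑ cᵢ xⁱ ∗ g` of the shifts of `g`. -/
noncomputable def SkewPoly.combo {R : Type*} [Ring R] {θ : RingAut R}
    (g : SkewPoly R θ) (N : ℕ) (c : Fin N → R) : SkewPoly R θ :=
  ∑ i : Fin N, SkewPoly.C θ (c i) * SkewPoly.X θ ^ (i : ℕ) * g


open SkewPoly DualNumber in
/-- For the code `C = ⟨g(x)⟩` with `g` monic of degree `r` and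
`xⁿ - 1 = k(x) ∗ g(x)` in `R[x;θ]`, the set `β = {g, x∗g, …, x^{n-r-1}∗g}`
is a minimal generating set over `R` (every codeword has a unique
representation as an `R`-combination of `β`), and `|C| = p^{2(n-r)}`. -/
theorem skew_code_monic_generating_set (p : ℕ) (hp : p.Prime) (hodd : p ≠ 2)
    (θ : RingAut (DualNumber (ZMod p))) (n : ℕ) (hn : 0 < n)
    (g : SkewPoly (DualNumber (ZMod p)) θ) (hg : SkewPoly.Monic g)
    (r : ℕ) (hr : SkewPoly.natDegree g = r) (hrn : r ≤ n)
    (k : SkewPoly (DualNumber (ZMod p)) θ) (hk : SkewPoly.X θ ^ n - 1 = k * g)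
    (Code : Submodule (SkewPoly (DualNumber (ZMod p)) θ)
      (SkewPoly (DualNumber (ZMod p)) θ ⧸ Ideal.span {SkewPoly.X θ ^ n - 1}))
    (hCode : Code = Submodule.span (SkewPoly (DualNumber (ZMod p)) θ)
      {(Ideal.span {SkewPoly.X θ ^ n - 1}).mkQ g}) :
    (∀ x : SkewPoly (DualNumber (ZMod p)) θ ⧸ Ideal.span {SkewPoly.X θ ^ n - 1},
      x ∈ Code ↔ ∃! c : Fin (n - r) → DualNumber (ZMod p),
        x = (Ideal.span {SkewPoly.X θ ^ n - 1}).mkQ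
          (∑ i : Fin (n - r), SkewPoly.C θ (c i) * SkewPoly.X θ ^ (i : ℕ) * g)) ∧
    Nat.card Code = p ^ (2 * (n - r)) := by
  haveI : Fact p.Prime := ⟨hp⟩
  classical
  subst hCode
  set R' := DualNumber (ZMod p)
  set I : Ideal (SkewPoly R' θ) := Ideal.span {SkewPoly.X θ ^ n - 1} with hI
  -- coefficients of g
  have hgc1 : g.coeff r = 1 := by
    rw [← hr]; exact hg
  have hgc0 : ∀ j, r < j → g.coeff j = 0 := fun j hj => coeff_natDegree_lt' (hr ▸ hj)
  -- coefficients of Xⁿ - 1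
  have hXn : ∀ m, (SkewPoly.X θ ^ n - 1 : SkewPoly R' θ).coeff m
      = (if n = m then 1 else 0) - (if 0 = m then 1 else 0) := by
    intro m
    rw [coeff_sub', X_pow_eq]
    show (Finsupp.single n 1 : ℕ →₀ R') m - (Finsupp.single 0 1 : ℕ →₀ R') m = _
    rw [Finsupp.single_apply, Finsupp.single_apply]
  -- k is nonzero
  have hknz : k ≠ 0 := by
    intro h
    have h1 := hXn n
    rw [hk, h, zero_mul, coeff_zero', if_pos rfl, if_neg (by omega), sub_zero] at h1
    exact one_ne_zero h1.symm
  have hk0' : ∀ j, k.natDegree < j → k.coeff j = 0 := fun j hj => coeff_natDegree_lt' hj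
  have htop : (k * g).coeff (k.natDegree + r) = k.coeff k.natDegree := by
    rw [coeff_mul_top' hk0' hgc0, hgc1, map_one, mul_one]
  -- natDegree k = n - r
  have hsn : k.natDegree + r = n := by
    have hge : n ≤ k.natDegree + r := by
      by_contra hlt
      push_neg at hlt
      have h0 : (k * g).coeff n = 0 := coeff_mul_eq_zero' hk0' hgc0 hlt
      have h1 := hXn n
      rw [hk, h0, if_pos rfl, if_neg (by omega), sub_zero] at h1
      exact one_ne_zero h1.symm
    rcases lt_trichotomy (k.natDegree + r) n with h | h | h
    · omega
    · exact h
    · exfalso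
      have h1 := hXn (k.natDegree + r)
      rw [hk, htop, if_neg (by omega), if_neg (by omega), sub_zero] at h1
      exact coeff_natDegree_ne_zero'_s14 hknz h1
  have hks1 : k.coeff (n - r) = 1 := by
    have h1 := hXn (k.natDegree + r)
    rw [hk, htop, if_pos hsn.symm, if_neg (by omega), sub_zero] at h1
    rw [show n - r = k.natDegree by omega]
    exact h1
  have hks0 : ∀ j, n - r < j → k.coeff j = 0 := by
    intro j hj
    exact hk0' j (by omega)
  -- membership of combinations
  have hmem : ∀ a : SkewPoly R' θ, I.mkQ (a * g) ∈
      Submodule.span (SkewPoly R' θ) {I.mkQ g} := by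
    intro a
    rw [Submodule.mem_span_singleton]
    exact ⟨a, by rw [← LinearMap.map_smul, smul_eq_mul]⟩
  have hπeq : ∀ x y : SkewPoly R' θ, I.mkQ x = I.mkQ y ↔ x - y ∈ I := by
    intro x y
    rw [Submodule.mkQ_apply, Submodule.mkQ_apply]
    exact Submodule.Quotient.eq I
  -- combo and its unfolding
  have hcombo : ∀ c : Fin (n - r) → R', combo g (n - r) c
      = (∑ i : Fin (n - r), SkewPoly.C θ (c i) * SkewPoly.X θ ^ (i : ℕ)) * g := by
    intro c
    rw [combo, Finset.sum_mul]
  -- uniqueness core : bounded multiples of g in I vanish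
  have hcore : ∀ h : SkewPoly R' θ, (∀ m, n - r ≤ m → h.coeff m = 0) →
      h * g ∈ I → h = 0 := by
    intro h hh hmemI
    rw [hI, Ideal.span, Submodule.mem_span_singleton] at hmemI
    obtain ⟨a, ha⟩ := hmemI
    rw [smul_eq_mul, hk, ← mul_assoc] at ha
    have hak : h = a * k := (right_cancel' hgc1 hgc0 ha).symm
    by_cases ha0 : a = 0
    · rw [hak, ha0, zero_mul]
    · exfalso
      have h1 : (a * k).coeff (a.natDegree + (n - r)) = a.coeff a.natDegree := by
        rw [coeff_mul_top' (fun i hi => coeff_natDegree_lt' hi) hks0, hks1,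
          map_one, mul_one]
      have h2 : h.coeff (a.natDegree + (n - r)) = 0 := hh _ (by omega)
      rw [hak, h1] at h2
      exact coeff_natDegree_ne_zero'_s14 ha0 h2
  -- uniqueness
  have huniq : ∀ c c' : Fin (n - r) → R',
      I.mkQ (combo g (n - r) c) = I.mkQ (combo g (n - r) c') → c = c' := by
    intro c c' hcc
    have hDsub : (∑ i : Fin (n - r), SkewPoly.C θ (c i) * SkewPoly.X θ ^ (i : ℕ))
        - (∑ i : Fin (n - r), SkewPoly.C θ (c' i) * SkewPoly.X θ ^ (i : ℕ))
        = ∑ i : Fin (n - r), SkewPoly.C θ (c i - c' i) * SkewPoly.X θ ^ (i : ℕ) := by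
      rw [← Finset.sum_sub_distrib]
      refine Finset.sum_congr rfl fun i _ => ?_
      rw [C_mul_X_pow, C_mul_X_pow, C_mul_X_pow]
      exact (Finsupp.single_sub _ _ _).symm
    have hmemI : (∑ i : Fin (n - r), SkewPoly.C θ (c i - c' i) * SkewPoly.X θ ^ (i : ℕ))
        * g ∈ I := by
      rw [← hDsub, sub_mul, ← hcombo, ← hcombo]
      exact (hπeq _ _).1 hcc
    have hz := hcore _ (fun m hm => by
      rw [coeff_finsum, dif_neg (by omega)]) hmemI
    funext i
    have hzi := congrArg (fun f : SkewPoly R' θ => f.coeff (i : ℕ)) hz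
    rw [coeff_finsum, dif_pos i.isLt, Fin.eta, coeff_zero'] at hzi
    exact sub_eq_zero.1 hzi
  -- existence
  have hexists : ∀ x : SkewPoly R' θ ⧸ I,
      x ∈ Submodule.span (SkewPoly R' θ) {I.mkQ g} →
      ∃ c : Fin (n - r) → R', x = I.mkQ (combo g (n - r) c) := by
    intro x hx
    rw [Submodule.mem_span_singleton] at hx
    obtain ⟨a, ha⟩ := hx
    obtain ⟨q, hq⟩ := div_aux hks1 hks0 (a.natDegree + 1) a
      (fun m hm => coeff_natDegree_lt' (by omega))
    refine ⟨fun i => (a - q * k).coeff (i : ℕ), ?_⟩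
    have h1 : combo g (n - r) (fun i => (a - q * k).coeff (i : ℕ)) = (a - q * k) * g := by
      rw [hcombo]
      congr 1
      exact (eq_sum_single' hq).symm
    have h2 : I.mkQ (a * g) = I.mkQ ((a - q * k) * g) := by
      rw [hπeq]
      have h3 : a * g - (a - q * k) * g = q * (SkewPoly.X θ ^ n - 1) := by
        rw [sub_mul, sub_sub_cancel, hk, mul_assoc]
      rw [h3, hI, Ideal.span]
      rw [Submodule.mem_span_singleton]
      exact ⟨q, by rw [smul_eq_mul]⟩
    rw [← ha, ← LinearMap.map_smul, smul_eq_mul, h2, h1]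
  constructor
  · intro x
    constructor
    · intro hx
      obtain ⟨c, hc⟩ := hexists x hx
      exact ⟨c, hc, fun c' hc' => huniq c' c ((hc'.symm.trans hc : _))⟩
    · rintro ⟨c, hc, -⟩
      rw [hc]
      show I.mkQ (combo g (n - r) c) ∈ _
      rw [hcombo]
      exact hmem _
  · -- cardinality
    have hbij : Function.Bijective (fun c : Fin (n - r) → R' =>
        (⟨I.mkQ (combo g (n - r) c), by rw [hcombo]; exact hmem _⟩ :
          Submodule.span (SkewPoly R' θ) {I.mkQ g})) := by
      constructor
      · intro c c' hcc
        exact huniq c c' (congrArg Subtype.val hcc)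
      · rintro ⟨x, hx⟩
        obtain ⟨c, hc⟩ := hexists x hx
        exact ⟨c, Subtype.ext hc.symm⟩
    have h1 := Nat.card_eq_of_bijective _ hbij
    rw [Nat.card_fun, show Nat.card (Fin (n - r)) = n - r by simp] at h1
    have h2 : Nat.card R' = p * p := by
      have h3 := Nat.card_prod (ZMod p) (ZMod p)
      rw [Nat.card_zmod] at h3
      exact h3
    rw [← h1, h2, pow_mul, sq]
end
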